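/- Let X be a finite dimensional strictly convex and smooth real normed linear space. Let T be a continuous linear operator on X for which there exist x, y ∈ S_X satisfying x ∈ M_T, y ⊥_B x, and Ty ≠ 0. Then T is not a left symmetric point of the space of operators (with the operator norm). -/

import Mathlib

/-- Birkhoff-James orthogonality: `x ⊥_B y` iff `‖x + λ y‖ ≥ ‖x‖` for all real `λ`. -/
def BJOrth {X : Type*} [NormedAddCommGroup X] [NormedSpace ℝ X] (x y : X) : Prop :=
  ∀ l : ℝ, ‖x‖ ≤ ‖x + l • y‖

/-- `x` is a left symmetric point: `x ⊥_B y` implies `y ⊥_B x` for every `y`. -/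
def LeftSymPoint {X : Type*} [NormedAddCommGroup X] [NormedSpace ℝ X] (x : X) : Prop :=
  ∀ y : X, BJOrth x y → BJOrth y x

/-- The norm attainment set `M_T` of a continuous linear operator `T`. -/
def normAttainSet {X : Type*} [NormedAddCommGroup X] [NormedSpace ℝ X]
    (T : X →L[ℝ] X) : Set X :=
  {x : X | ‖x‖ = 1 ∧ ‖T x‖ = ‖T‖}

/-- A smooth space: every nonzero vector has a unique norming functional. -/
def SmoothSpace (X : Type*) [NormedAddCommGroup X] [NormedSpace ℝ X] : Prop :=
  ∀ x : X, x ≠ 0 → ∃! f : X →L[ℝ] ℝ, ‖f‖ = 1 ∧ f x = ‖x‖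


lemma exists_norm_attain {X : Type*} [NormedAddCommGroup X] [NormedSpace ℝ X]
    [FiniteDimensional ℝ X] [Nontrivial X] (S : X →L[ℝ] X) :
    ∃ z : X, ‖z‖ = 1 ∧ ‖S z‖ = ‖S‖ := by
  have hne : (Metric.sphere (0:X) 1).Nonempty := NormedSpace.sphere_nonempty.2 zero_le_one
  obtain ⟨z, hzs, hmax⟩ := (isCompact_sphere (0:X) 1).exists_isMaxOn hne
    (Continuous.continuousOn (by continuity : Continuous fun w : X => ‖S w‖))
  have hz1 : ‖z‖ = 1 := by simpa using hzs
  refine ⟨z, hz1, le_antisymm (by simpa [hz1] using S.le_opNorm z) ?_⟩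
  refine S.opNorm_le_bound (norm_nonneg _) fun w => ?_
  rcases eq_or_ne w 0 with rfl | hw
  · simp
  · have hu : ‖w‖⁻¹ • w ∈ Metric.sphere (0:X) 1 := by
      simp [norm_smul, abs_of_nonneg, inv_mul_cancel₀ (norm_ne_zero_iff.2 hw)]
    have h2 : ‖S (‖w‖⁻¹ • w)‖ ≤ ‖S z‖ := hmax hu
    rw [map_smul, norm_smul, norm_inv, norm_norm] at h2
    have hwpos : (0:ℝ) < ‖w‖ := norm_pos_iff.2 hw
    calc ‖S w‖ = ‖w‖ * (‖w‖⁻¹ * ‖S w‖) := by field_simp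
    _ ≤ ‖w‖ * ‖S z‖ := by nlinarith [norm_nonneg (S w)]
    _ = ‖S z‖ * ‖w‖ := mul_comm _ _

lemma exists_functional {X : Type*} [NormedAddCommGroup X] [NormedSpace ℝ X]
    [FiniteDimensional ℝ X] (x y : X) (hx : ‖x‖ = 1) (hy : ‖y‖ = 1)
    (hyx : BJOrth y x) : ∃ g : X →L[ℝ] ℝ, ‖g‖ ≤ 1 ∧ g y = 1 ∧ g x = 0 := by
  have hxne : x ≠ 0 := by intro h; rw [h] at hx; simp at hx
  have hli : LinearIndependent ℝ ![y, x] := by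
    rw [linearIndependent_fin2]
    refine ⟨hxne, fun a hax => ?_⟩
    simp only [Matrix.cons_val_one, Matrix.head_cons, Matrix.cons_val_zero] at hax
    have h1 := hyx (-a)
    rw [hy, show y + (-a) • x = 0 by rw [← hax]; module] at h1
    norm_num at h1
  set p : Submodule ℝ X := Submodule.span ℝ (Set.range ![y, x]) with hp
  let B : Module.Basis (Fin 2) ℝ p := Module.Basis.span hli
  have hB0 : (B 0 : X) = y := by exact congrArg Subtype.val (Module.Basis.span_apply hli 0)
  have hB1 : (B 1 : X) = x := by exact congrArg Subtype.val (Module.Basis.span_apply hli 1)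
  -- key bound on coordinates
  have key : ∀ v : p, |B.repr v 0| ≤ ‖v‖ := by
    intro v
    have hv : (v : X) = B.repr v 0 • y + B.repr v 1 • x := by
      conv_lhs => rw [← B.sum_repr v]
      push_cast
      rw [Fin.sum_univ_two, hB0, hB1]
    set a := B.repr v 0
    set b := B.repr v 1
    rcases eq_or_ne a 0 with ha | ha
    · simp [ha]
    · have : ‖(v : X)‖ = |a| * ‖y + (b / a) • x‖ := by
        rw [hv, show a • y + b • x = a • (y + (b/a) • x) by
          rw [smul_add, smul_smul]; field_simp, norm_smul, Real.norm_eq_abs]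
      have h2 := hyx (b / a)
      rw [hy] at h2
      have : |a| ≤ ‖(v : X)‖ := by
        rw [this]
        nlinarith [abs_nonneg a]
      exact this
  let f₀ : p →ₗ[ℝ] ℝ := B.coord 0
  let f : p →L[ℝ] ℝ := LinearMap.toContinuousLinearMap f₀
  have hfle : ‖f‖ ≤ 1 := by
    refine ContinuousLinearMap.opNorm_le_bound f zero_le_one fun v => ?_
    rw [one_mul]
    simpa [f, f₀, Real.norm_eq_abs, Module.Basis.coord_apply] using key v
  obtain ⟨g, hgext, hgnorm⟩ := exists_extension_norm_eq p f
  refine ⟨g, by rw [hgnorm]; exact hfle, ?_, ?_⟩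
  · have := hgext (B 0)
    rw [hB0] at this
    rw [this]
    simp [f, f₀, Module.Basis.coord_apply, Module.Basis.repr_self]
  · have := hgext (B 1)
    rw [hB1] at this
    rw [this]
    simp [f, f₀, Module.Basis.coord_apply, Module.Basis.repr_self]

lemma eq_of_norming {X : Type*} [NormedAddCommGroup X] [NormedSpace ℝ X]
    [StrictConvexSpace ℝ X] (g : X →L[ℝ] ℝ) (hg : ‖g‖ ≤ 1) (y z : X)
    (hy : ‖y‖ = 1) (hz : ‖z‖ = 1) (hgy : g y = 1) (hgz : g z = 1) : z = y := by
  have hsum : ‖z + y‖ = ‖z‖ + ‖y‖ := by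
    refine le_antisymm (norm_add_le _ _) ?_
    have h1 : (2:ℝ) = g (z + y) := by rw [map_add, hgy, hgz]; norm_num
    have h2 : g (z + y) ≤ ‖g‖ * ‖z + y‖ := by
      calc g (z + y) ≤ |g (z + y)| := le_abs_self _
      _ = ‖g (z + y)‖ := rfl
      _ ≤ ‖g‖ * ‖z + y‖ := g.le_opNorm _
    have h3 : ‖g‖ * ‖z + y‖ ≤ ‖z + y‖ := by
      have := norm_nonneg (z + y); nlinarith
    rw [hz, hy]; linarith
  exact eq_of_norm_eq_of_norm_add_eq (hz.trans hy.symm) hsum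

open Filter Topology

theorem not_leftSym_of_nonzero_on_orthogonal {X : Type*} [NormedAddCommGroup X]
    [NormedSpace ℝ X] [FiniteDimensional ℝ X] [StrictConvexSpace ℝ X]
    (hsm : SmoothSpace X) (T : X →L[ℝ] X) (x y : X)
    (hx : ‖x‖ = 1) (hy : ‖y‖ = 1) (hxMT : x ∈ normAttainSet T)
    (hyx : BJOrth y x) (hTy : T y ≠ 0) :
    ¬ LeftSymPoint T := by
  intro hsym
  obtain ⟨-, hxT⟩ := hxMT
  have hxne : x ≠ 0 := by intro h; rw [h] at hx; simp at hx
  haveI : Nontrivial X := nontrivial_of_ne x 0 hxne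
  obtain ⟨g, hg1, hgy, hgx⟩ := exists_functional x y hx hy hyx
  set A : X →L[ℝ] X := g.smulRight (T y) with hA
  have hAapp : ∀ z, A z = g z • T y := fun z => rfl
  have hTypos : 0 < ‖T y‖ := norm_pos_iff.2 hTy
  have hgb : ∀ z : X, ‖z‖ = 1 → |g z| ≤ 1 := by
    intro z hz
    calc |g z| = ‖g z‖ := rfl
    _ ≤ ‖g‖ * ‖z‖ := g.le_opNorm z
    _ ≤ 1 := by rw [hz, mul_one]; exact hg1
  have hAy : A y = T y := by rw [hAapp, hgy, one_smul]
  have hAge : ‖T y‖ ≤ ‖A‖ := by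
    calc ‖T y‖ = ‖A y‖ := by rw [hAy]
    _ ≤ ‖A‖ * ‖y‖ := A.le_opNorm y
    _ = ‖A‖ := by rw [hy, mul_one]
  -- T ⊥_B A
  have hTA : BJOrth T A := by
    intro l
    have hx0 : (T + l • A) x = T x := by
      simp [ContinuousLinearMap.add_apply, ContinuousLinearMap.smul_apply, hAapp, hgx]
    calc ‖T‖ = ‖(T + l • A) x‖ := by rw [hx0, hxT]
    _ ≤ ‖T + l • A‖ * ‖x‖ := (T + l • A).le_opNorm x
    _ = ‖T + l • A‖ := by rw [hx, mul_one]
  have hAT : BJOrth A T := hsym A hTA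
  -- sequence of norm-attaining points
  set c : ℕ → ℝ := fun n => 1 / (n + 1) with hcdef
  have hcpos : ∀ n, 0 < c n := fun n => by positivity
  choose z hz1 hzmax using fun n => exists_norm_attain (A + (-(c n)) • T)
  set w : ℕ → X := fun n => if 0 ≤ g (z n) then z n else -(z n) with hwdef
  have hw1 : ∀ n, ‖w n‖ = 1 := by
    intro n; rw [hwdef]; dsimp only
    split <;> simp [hz1 n]
  have hwg : ∀ n, 0 ≤ g (w n) := by
    intro n; rw [hwdef]; dsimp only
    split_ifs with h
    · exact h
    · rw [map_neg]; linarith [lt_of_not_ge h]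
  have hwmax : ∀ n, ‖(A + (-(c n)) • T) (w n)‖ = ‖A + (-(c n)) • T‖ := by
    intro n; rw [hwdef]; dsimp only
    split
    · exact hzmax n
    · rw [map_neg, norm_neg]; exact hzmax n
  have hlow : ∀ n, ‖T y‖ ≤ ‖(A + (-(c n)) • T) (w n)‖ := by
    intro n
    rw [hwmax n]
    calc ‖T y‖ ≤ ‖A‖ := hAge
    _ ≤ ‖A + (-(c n)) • T‖ := hAT (-(c n))
  have happ : ∀ n, (A + (-(c n)) • T) (w n) = g (w n) • T y - c n • T (w n) := by
    intro n
    simp [ContinuousLinearMap.add_apply, ContinuousLinearMap.smul_apply, hAapp]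
    module
  -- compactness: convergent subsequence
  have hwsph : ∀ n, w n ∈ Metric.sphere (0:X) 1 := by
    intro n; simpa using hw1 n
  obtain ⟨zz, hzs, φ, hφ, hconv⟩ := (isCompact_sphere (0:X) 1).tendsto_subseq hwsph
  have hzz1 : ‖zz‖ = 1 := by simpa using hzs
  have hcphi : Tendsto (fun n => c (φ n)) atTop (𝓝 0) :=
    (tendsto_one_div_add_atTop_nhds_zero_nat).comp hφ.tendsto_atTop
  -- ‖A zz‖ ≥ ‖T y‖, hence g zz = 1
  have hbound : ∀ n, ‖T y‖ ≤ ‖A (w (φ n))‖ + c (φ n) * ‖T‖ := by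
    intro n
    calc ‖T y‖ ≤ ‖(A + (-(c (φ n))) • T) (w (φ n))‖ := hlow (φ n)
    _ = ‖A (w (φ n)) + (-(c (φ n))) • T (w (φ n))‖ := by
        simp [ContinuousLinearMap.add_apply, ContinuousLinearMap.smul_apply]
    _ ≤ ‖A (w (φ n))‖ + ‖(-(c (φ n))) • T (w (φ n))‖ := norm_add_le _ _
    _ ≤ ‖A (w (φ n))‖ + c (φ n) * ‖T‖ := by
        rw [norm_smul, norm_neg, Real.norm_eq_abs, abs_of_pos (hcpos (φ n))]
        have h1 : ‖T (w (φ n))‖ ≤ ‖T‖ := by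
          calc ‖T (w (φ n))‖ ≤ ‖T‖ * ‖w (φ n)‖ := T.le_opNorm _
          _ = ‖T‖ := by rw [hw1, mul_one]
        nlinarith [hcpos (φ n)]
  have hconvA : Tendsto (fun n => ‖A (w (φ n))‖ + c (φ n) * ‖T‖) atTop
      (𝓝 (‖A zz‖ + 0 * ‖T‖)) := by
    exact ((A.continuous.norm.tendsto zz).comp hconv).add (hcphi.mul_const ‖T‖)
  have hAzz : ‖T y‖ ≤ ‖A zz‖ := by
    have := le_of_tendsto_of_tendsto' tendsto_const_nhds hconvA hbound
    simpa using this
  have hgzznn : 0 ≤ g zz :=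
    le_of_tendsto_of_tendsto' tendsto_const_nhds ((g.continuous.tendsto zz).comp hconv)
      (fun n => hwg (φ n))
  have hgzz : g zz = 1 := by
    rw [hAapp, norm_smul, Real.norm_eq_abs] at hAzz
    have h1 := hgb zz hzz1
    rw [abs_of_nonneg hgzznn] at hAzz h1
    nlinarith
  have hzzy : zz = y := eq_of_norming g hg1 y zz hy hzz1 hgy hgzz
  rw [hzzy] at hconv
  -- final contradiction
  have hTw : Tendsto (fun n => ‖T (w (φ n)) - T y‖) atTop (𝓝 0) := by
    have h1 : Tendsto (fun n => T (w (φ n)) - T y) atTop (𝓝 (T y - T y)) :=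
      ((T.continuous.tendsto y).comp hconv).sub tendsto_const_nhds
    rw [sub_self] at h1
    simpa using h1.norm
  have hgw : Tendsto (fun n => g (w (φ n))) atTop (𝓝 1) := by
    have := (g.continuous.tendsto y).comp hconv
    rwa [hgy] at this
  have hev1 : ∀ᶠ n in atTop, ‖T (w (φ n)) - T y‖ < ‖T y‖ :=
    hTw.eventually_lt_const hTypos
  have hev2 : ∀ᶠ n in atTop, c (φ n) < g (w (φ n)) :=
    hcphi.eventually_lt hgw one_pos
  obtain ⟨n, h1, h2⟩ := (hev1.and hev2).exists
  -- estimate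
  set s := g (w (φ n))
  set μ := c (φ n)
  set v := w (φ n)
  have hs1 : s ≤ 1 := le_trans (le_abs_self _) (hgb v (hw1 (φ n)))
  have hrw : s • T y - μ • T v = (s - μ) • T y - μ • (T v - T y) := by module
  have hub : ‖(A + (-μ) • T) v‖ < ‖T y‖ := by
    rw [happ (φ n), hrw]
    calc ‖(s - μ) • T y - μ • (T v - T y)‖
        ≤ ‖(s - μ) • T y‖ + ‖μ • (T v - T y)‖ := norm_sub_le _ _
    _ = |s - μ| * ‖T y‖ + |μ| * ‖T v - T y‖ := by rw [norm_smul, norm_smul]; rfl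
    _ < ‖T y‖ := by
        have hμpos := hcpos (φ n)
        rw [abs_of_pos hμpos, abs_of_nonneg (by linarith : (0:ℝ) ≤ s - μ)]
        nlinarith
  exact absurd (hlow (φ n)) (not_le.2 hub)
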